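/- The map f₆ : U(1) × SU(2) × SU(6) → S(U(2) × U(6)) given by f₆(a, A, B) = diag(a⁶A, a⁻²B) is a surjective group homomorphism whose kernel is the cyclic group of order 12 consisting of the elements (a, a⁻⁶E₂, a²E₆) with a¹² = 1; hence S(U(2) × U(6)) ≅ (U(1) × SU(2) × SU(6))/Z₁₂. -/

import Mathlib

open Matrix

/-- `f₆(a, A, B) = diag(a⁶A, a⁻²B)` as an `8×8` complex matrix (blocks indexed by
`Fin 2 ⊕ Fin 6`). -/
noncomputable def f₆ (a : ℂ) (A : Matrix (Fin 2) (Fin 2) ℂ) (B : Matrix (Fin 6) (Fin 6) ℂ) :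
    Matrix (Fin 2 ⊕ Fin 6) (Fin 2 ⊕ Fin 6) ℂ :=
  fromBlocks (a ^ 6 • A) 0 0 ((a ^ 2)⁻¹ • B)

/-- `S(U(2) × U(6))`: block-diagonal matrices `diag(C, D)` with `C ∈ U(2)`, `D ∈ U(6)`,
inside `SU(8)`. -/
def SU2xU6 : Set (Matrix (Fin 2 ⊕ Fin 6) (Fin 2 ⊕ Fin 6) ℂ) :=
  {M | M ∈ Matrix.specialUnitaryGroup (Fin 2 ⊕ Fin 6) ℂ ∧
    ∃ (C : Matrix (Fin 2) (Fin 2) ℂ) (D : Matrix (Fin 6) (Fin 6) ℂ),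
      C ∈ Matrix.unitaryGroup (Fin 2) ℂ ∧ D ∈ Matrix.unitaryGroup (Fin 6) ℂ ∧
      M = fromBlocks C 0 0 D}

lemma norm_one_of_unitary {z : ℂ} (hz : z ∈ unitary ℂ) : ‖z‖ = 1 := by
  have h : star z * z = 1 := hz.1
  rw [Complex.star_def, ← Complex.normSq_eq_conj_mul_self] at h
  have : Complex.normSq z = 1 := by exact_mod_cast h
  have h2 : ‖z‖ ^ 2 = 1 := by
    rw [Complex.sq_norm, this]
  nlinarith [norm_nonneg z]

lemma smul_mem_unitaryGroup {n : Type*} [Fintype n] [DecidableEq n] (c : ℂ)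
    (hc : ‖c‖ = 1) {A : Matrix n n ℂ} (hA : A ∈ Matrix.unitaryGroup n ℂ) :
    c • A ∈ Matrix.unitaryGroup n ℂ := by
  have hcc : star c * c = 1 := by
    rw [Complex.star_def, ← Complex.normSq_eq_conj_mul_self, Complex.normSq_eq_norm_sq,
      hc]; norm_num
  constructor
  · show star (c • A) * (c • A) = 1
    rw [star_smul, smul_mul_smul_comm, hcc, one_smul]
    exact hA.1
  · show (c • A) * star (c • A) = 1
    rw [star_smul, smul_mul_smul_comm, mul_comm c, hcc, one_smul]
    exact hA.2

lemma detBlocks (C : Matrix (Fin 2) (Fin 2) ℂ) (D : Matrix (Fin 6) (Fin 6) ℂ) :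
    (fromBlocks C 0 0 D).det = C.det * D.det := by
  refine Eq.trans (congrArg Matrix.det ?_) (det_fromBlocks_zero₂₁ C 0 D)
  exact Matrix.ext fun i j => by cases i <;> cases j <;> rfl

lemma fromBlocks_mem_unitaryGroup {C : Matrix (Fin 2) (Fin 2) ℂ} {D : Matrix (Fin 6) (Fin 6) ℂ}
    (hC : C ∈ Matrix.unitaryGroup (Fin 2) ℂ) (hD : D ∈ Matrix.unitaryGroup (Fin 6) ℂ) :
    fromBlocks C 0 0 D ∈ Matrix.unitaryGroup (Fin 2 ⊕ Fin 6) ℂ := by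
  have hs : star (fromBlocks C 0 0 D) = fromBlocks (star C) 0 0 (star D) := by
    show (fromBlocks C 0 0 D)ᴴ = _
    simp [fromBlocks_conjTranspose, star_eq_conjTranspose]
  constructor
  · show star (fromBlocks C 0 0 D) * fromBlocks C 0 0 D = 1
    rw [hs, fromBlocks_multiply]
    simp [hC.1, hD.1, fromBlocks_one]
  · show fromBlocks C 0 0 D * star (fromBlocks C 0 0 D) = 1
    rw [hs, fromBlocks_multiply]
    simp [hC.2, hD.2, fromBlocks_one]

/-- `f₆ : U(1) × SU(2) × SU(6) → S(U(2) × U(6))` is a surjective group homomorphism whose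
kernel is the cyclic group of order 12 consisting of the elements `(a, a⁻⁶E₂, a²E₆)`
with `a¹² = 1`. -/
theorem stmt2 :
    (∀ (a a' : ℂ) (A A' : Matrix (Fin 2) (Fin 2) ℂ) (B B' : Matrix (Fin 6) (Fin 6) ℂ),
        f₆ (a * a') (A * A') (B * B') = f₆ a A B * f₆ a' A' B') ∧
    (∀ (a : ℂ) (A : Matrix (Fin 2) (Fin 2) ℂ) (B : Matrix (Fin 6) (Fin 6) ℂ), ‖a‖ = 1 →
        A ∈ Matrix.specialUnitaryGroup (Fin 2) ℂ →
        B ∈ Matrix.specialUnitaryGroup (Fin 6) ℂ → f₆ a A B ∈ SU2xU6) ∧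
    (∀ M ∈ SU2xU6, ∃ (a : ℂ) (A : Matrix (Fin 2) (Fin 2) ℂ) (B : Matrix (Fin 6) (Fin 6) ℂ),
        ‖a‖ = 1 ∧ A ∈ Matrix.specialUnitaryGroup (Fin 2) ℂ ∧
        B ∈ Matrix.specialUnitaryGroup (Fin 6) ℂ ∧ f₆ a A B = M) ∧
    (∀ (a : ℂ) (A : Matrix (Fin 2) (Fin 2) ℂ) (B : Matrix (Fin 6) (Fin 6) ℂ), ‖a‖ = 1 →
        A ∈ Matrix.specialUnitaryGroup (Fin 2) ℂ →
        B ∈ Matrix.specialUnitaryGroup (Fin 6) ℂ →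
        (f₆ a A B = 1 ↔
          a ^ 12 = 1 ∧ A = (a ^ 6)⁻¹ • (1 : Matrix (Fin 2) (Fin 2) ℂ) ∧
            B = a ^ 2 • (1 : Matrix (Fin 6) (Fin 6) ℂ))) := by
  refine ⟨?_, ?_, ?_, ?_⟩
  · -- homomorphism
    intro a a' A A' B B'
    unfold f₆
    rw [fromBlocks_multiply]
    simp only [Matrix.mul_zero, Matrix.zero_mul, add_zero, zero_add,
      smul_mul_smul_comm, mul_pow, mul_inv]
  · -- maps into SU2xU6
    intro a A B ha hA hB
    rw [Matrix.mem_specialUnitaryGroup_iff] at hA hB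
    have ha0 : a ≠ 0 := by intro h; simp [h] at ha
    have hC : a ^ 6 • A ∈ Matrix.unitaryGroup (Fin 2) ℂ :=
      smul_mem_unitaryGroup _ (by simp [norm_pow, ha]) hA.1
    have hD : (a ^ 2)⁻¹ • B ∈ Matrix.unitaryGroup (Fin 6) ℂ :=
      smul_mem_unitaryGroup _ (by simp [norm_inv, norm_pow, ha]) hB.1
    refine ⟨?_, _, _, hC, hD, rfl⟩
    rw [Matrix.mem_specialUnitaryGroup_iff]
    refine ⟨fromBlocks_mem_unitaryGroup hC hD, ?_⟩
    unfold f₆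
    rw [detBlocks]
    simp only [det_smul, Fintype.card_fin, hA.2, hB.2, mul_one]
    rw [inv_pow, ← pow_mul, ← pow_mul]
    norm_num
    exact mul_inv_cancel₀ (pow_ne_zero _ ha0)
  · -- surjective
    rintro M ⟨hM, C, D, hC, hD, rfl⟩
    rw [Matrix.mem_specialUnitaryGroup_iff] at hM
    have hdet : C.det * D.det = 1 := by
      have := hM.2
      rwa [detBlocks] at this
    have hnC : ‖C.det‖ = 1 := norm_one_of_unitary (det_of_mem_unitary hC)
    obtain ⟨a, ha12⟩ := IsAlgClosed.exists_pow_nat_eq C.det (n := 12) (by norm_num)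
    have hna : ‖a‖ = 1 := by
      have h12 : ‖a‖ ^ 12 = 1 := by rw [← norm_pow, ha12, hnC]
      rcases lt_trichotomy ‖a‖ 1 with h1 | h1 | h1
      · have := pow_lt_one₀ (norm_nonneg a) h1 (n := 12) (by norm_num)
        linarith
      · exact h1
      · have := one_lt_pow₀ h1 (n := 12) (by norm_num)
        linarith
    have ha0 : a ≠ 0 := by intro h; simp [h] at hna
    refine ⟨a, (a ^ 6)⁻¹ • C, a ^ 2 • D, hna, ?_, ?_, ?_⟩
    · rw [Matrix.mem_specialUnitaryGroup_iff]
      refine ⟨smul_mem_unitaryGroup _ (by simp [norm_inv, norm_pow, hna]) hC, ?_⟩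
      have hCd0 : C.det ≠ 0 := by intro h; simp [h] at hnC
      simp only [det_smul, Fintype.card_fin]
      rw [inv_pow, ← pow_mul, (by norm_num : 6 * 2 = 12), ha12]
      exact inv_mul_cancel₀ hCd0
    · rw [Matrix.mem_specialUnitaryGroup_iff]
      refine ⟨smul_mem_unitaryGroup _ (by simp [norm_pow, hna]) hD, ?_⟩
      simp only [det_smul, Fintype.card_fin]
      rw [← pow_mul, (by norm_num : 2 * 6 = 12), ha12, hdet]
    · unfold f₆
      rw [smul_smul, smul_smul, mul_inv_cancel₀ (pow_ne_zero _ ha0),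
        inv_mul_cancel₀ (pow_ne_zero _ ha0), one_smul, one_smul]
  · -- kernel
    intro a A B ha hA hB
    rw [Matrix.mem_specialUnitaryGroup_iff] at hA hB
    have ha0 : a ≠ 0 := by intro h; simp [h] at ha
    constructor
    · intro h
      unfold f₆ at h
      rw [← fromBlocks_one] at h
      obtain ⟨h1, -, -, h2⟩ := fromBlocks_inj.mp h
      refine ⟨?_, ?_, ?_⟩
      · have := congr_arg Matrix.det h1
        simp only [det_smul, Fintype.card_fin, hA.2, mul_one, det_one] at this
        rwa [← pow_mul] at this
      · rw [← h1, smul_smul, inv_mul_cancel₀ (pow_ne_zero _ ha0), one_smul]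
      · rw [← h2, smul_smul, mul_inv_cancel₀ (pow_ne_zero _ ha0), one_smul]
    · rintro ⟨h12, rfl, rfl⟩
      unfold f₆
      rw [smul_smul, smul_smul, mul_inv_cancel₀ (pow_ne_zero _ ha0),
        inv_mul_cancel₀ (pow_ne_zero _ ha0), one_smul, one_smul, fromBlocks_one]
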